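/- Fix an integer s ≥ 1 and x ∈ ℝ. Assume δ_{11} > 0 and δ_{10} > 0, and let Y̲^A, Y̲^B ∈ ℝ satisfy Y̲^A ≤ Y^A_i and Y̲^B ≤ Y^B_i for all units i, with Y̲^A ≤ x and Y̲^B ≤ x. Then: (i) E_A[g_{s,x} | 1,1]·δ_{11} + E_A[g_{s,x} | 1,0]·δ_{10} ≤ D^s_A(x) ≤ E_A[g_{s,x} | 1,1]·δ_{11} + E_A[g_{s,x} | 1,0]·δ_{10} + ((x − Y̲^A)^{s−1}/(s−1)!)·δ_{00}; and (ii) E_B[g_{s,x} | 1,1]·δ_{11} ≤ D^s_B(x) ≤ E_B[g_{s,x} | 1,1]·δ_{11} + ((x − Y̲^B)^{s−1}/(s−1)!)·(δ_{00} + δ_{10}). (Worst-case identification bounds for the dominance functions under no assumption on nonresponse, Proposition D.1.) -/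

import Mathlib

open Finset

noncomputable section

/-- Fraction of units in the response class `(a, b)`. -/
def delta {N : ℕ} (ZA ZB : Fin N → Bool) (a b : Bool) : ℝ :=
  ((univ.filter (fun i => ZA i = a ∧ ZB i = b)).card : ℝ) / N

/-- Conditional mean of `g ∘ Y` given the response class `(a, b)`. -/
def condMean {N : ℕ} (Y : Fin N → ℝ) (ZA ZB : Fin N → Bool) (a b : Bool) (g : ℝ → ℝ) : ℝ :=
  (∑ i ∈ univ.filter (fun i => ZA i = a ∧ ZB i = b), g (Y i)) / ((N : ℝ) * delta ZA ZB a b)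

/-- Conditional CDF of `Y` given the response class `(a, b)`. -/
def condCDF' {N : ℕ} (Y : Fin N → ℝ) (ZA ZB : Fin N → Bool) (a b : Bool) (x : ℝ) : ℝ :=
  ((univ.filter (fun i => Y i ≤ x ∧ ZA i = a ∧ ZB i = b)).card : ℝ) / ((N : ℝ) * delta ZA ZB a b)

/-- Population CDF of `Y`. -/
def popCDF {N : ℕ} (Y : Fin N → ℝ) (x : ℝ) : ℝ :=
  ((univ.filter (fun i => Y i ≤ x)).card : ℝ) / N

/-- `s`-th order dominance function of the population `Y`. -/
def domFn {N : ℕ} (Y : Fin N → ℝ) (s : ℕ) (x : ℝ) : ℝ :=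
  (∑ i ∈ univ.filter (fun i => Y i ≤ x), (x - Y i) ^ (s - 1) / ((s - 1).factorial : ℝ)) / N

/-- `g_{s,x}(y) = ((x-y)^{s-1}/(s-1)!) 1[y ≤ x]`. -/
def gfun (s : ℕ) (x : ℝ) : ℝ → ℝ :=
  fun y => ((x - y) ^ (s - 1) / ((s - 1).factorial : ℝ)) * (if y ≤ x then 1 else 0)

lemma gfun_nonneg (s : ℕ) (x y : ℝ) : 0 ≤ gfun s x y := by
  unfold gfun
  by_cases h : y ≤ x
  · simp only [h, if_true, mul_one]
    exact div_nonneg (pow_nonneg (by linarith) _) (Nat.cast_nonneg _)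
  · simp [h]

lemma gfun_le (s : ℕ) (x Yl y : ℝ) (hy : Yl ≤ y) (hx : Yl ≤ x) :
    gfun s x y ≤ (x - Yl) ^ (s - 1) / ((s - 1).factorial : ℝ) := by
  have hfact : (0 : ℝ) ≤ ((s - 1).factorial : ℝ) := Nat.cast_nonneg _
  unfold gfun
  by_cases h : y ≤ x
  · simp only [h, if_true, mul_one]
    gcongr <;> linarith
  · simp only [h, if_false, mul_zero]
    exact div_nonneg (pow_nonneg (by linarith) _) hfact

lemma condMean_mul {N : ℕ} (Y : Fin N → ℝ) (ZA ZB : Fin N → Bool) (a b : Bool)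
    (g : ℝ → ℝ) (h : 0 < delta ZA ZB a b) :
    condMean Y ZA ZB a b g * delta ZA ZB a b
      = (∑ i ∈ univ.filter (fun i => ZA i = a ∧ ZB i = b), g (Y i)) / N := by
  have hN : (0 : ℝ) < N := by
    by_contra hc
    push_neg at hc
    have : (N : ℝ) = 0 := le_antisymm hc (Nat.cast_nonneg _)
    simp [delta, this] at h
  have hd : delta ZA ZB a b ≠ 0 := ne_of_gt h
  unfold condMean
  field_simp

lemma domFn_eq {N : ℕ} (Y : Fin N → ℝ) (s : ℕ) (x : ℝ) :
    domFn Y s x = (∑ i, gfun s x (Y i)) / N := by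
  unfold domFn gfun
  congr 1
  rw [Finset.sum_filter]
  refine Finset.sum_congr rfl fun i _ => ?_
  by_cases h : Y i ≤ x <;> simp [h]

/-- Proposition D.1 (worst-case identification bounds for the dominance functions
under no assumption on nonresponse). -/
theorem worst_case_bounds {N : ℕ} (hN : 1 ≤ N)
    (YA YB : Fin N → ℝ) (ZA ZB : Fin N → Bool)
    (hno : ∀ i, ¬(ZA i = false ∧ ZB i = true))
    (s : ℕ) (hs : 1 ≤ s) (x : ℝ)
    (h11 : 0 < delta ZA ZB true true) (h10 : 0 < delta ZA ZB true false)
    (YlA YlB : ℝ)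
    (hYA : ∀ i, YlA ≤ YA i) (hYB : ∀ i, YlB ≤ YB i)
    (hAx : YlA ≤ x) (hBx : YlB ≤ x) :
    (condMean YA ZA ZB true true (gfun s x) * delta ZA ZB true true
        + condMean YA ZA ZB true false (gfun s x) * delta ZA ZB true false
      ≤ domFn YA s x ∧
      domFn YA s x ≤
        condMean YA ZA ZB true true (gfun s x) * delta ZA ZB true true
        + condMean YA ZA ZB true false (gfun s x) * delta ZA ZB true false
        + ((x - YlA) ^ (s - 1) / ((s - 1).factorial : ℝ)) * delta ZA ZB false false) ∧
    (condMean YB ZA ZB true true (gfun s x) * delta ZA ZB true true ≤ domFn YB s x ∧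
      domFn YB s x ≤
        condMean YB ZA ZB true true (gfun s x) * delta ZA ZB true true
        + ((x - YlB) ^ (s - 1) / ((s - 1).factorial : ℝ))
            * (delta ZA ZB false false + delta ZA ZB true false)) := by
  have hNpos : (0 : ℝ) < N := by exact_mod_cast Nat.lt_of_lt_of_le Nat.zero_lt_one hN
  set T11 := univ.filter (fun i : Fin N => ZA i = true ∧ ZB i = true) with hT11
  set T10 := univ.filter (fun i : Fin N => ZA i = true ∧ ZB i = false) with hT10
  set T00 := univ.filter (fun i : Fin N => ZA i = false ∧ ZB i = false) with hT00
  have hsplit : ∀ f : Fin N → ℝ,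
      ∑ i, f i = (∑ i ∈ T11, f i) + (∑ i ∈ T10, f i) + (∑ i ∈ T00, f i) := by
    intro f
    rw [hT11, hT10, hT00, Finset.sum_filter, Finset.sum_filter, Finset.sum_filter,
      ← Finset.sum_add_distrib, ← Finset.sum_add_distrib]
    refine Finset.sum_congr rfl fun i _ => ?_
    rcases Bool.eq_false_or_eq_true (ZA i) with hA | hA <;>
      rcases Bool.eq_false_or_eq_true (ZB i) with hB | hB <;>
      simp [hA, hB]
    exact absurd ⟨hA, hB⟩ (hno i)
  have hdff : delta ZA ZB false false = (T00.card : ℝ) / N := rfl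
  have hdtf : delta ZA ZB true false = (T10.card : ℝ) / N := rfl
  have key : ∀ (Y : Fin N → ℝ) (Yl : ℝ), (∀ i, Yl ≤ Y i) → Yl ≤ x →
      (∀ (S : Finset (Fin N)), 0 ≤ ∑ i ∈ S, gfun s x (Y i)) ∧
      (∀ (S : Finset (Fin N)),
        ∑ i ∈ S, gfun s x (Y i) ≤ (S.card : ℝ) * ((x - Yl) ^ (s - 1) / ((s - 1).factorial : ℝ))) := by
    intro Y Yl hY hx
    constructor
    · intro S
      exact Finset.sum_nonneg fun i _ => gfun_nonneg s x (Y i)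
    · intro S
      calc ∑ i ∈ S, gfun s x (Y i)
          ≤ ∑ _i ∈ S, (x - Yl) ^ (s - 1) / ((s - 1).factorial : ℝ) :=
            Finset.sum_le_sum fun i _ => gfun_le s x Yl (Y i) (hY i) hx
        _ = (S.card : ℝ) * ((x - Yl) ^ (s - 1) / ((s - 1).factorial : ℝ)) := by
            rw [Finset.sum_const, nsmul_eq_mul]
  obtain ⟨hAnn, hAub⟩ := key YA YlA hYA hAx
  obtain ⟨hBnn, hBub⟩ := key YB YlB hYB hBx
  have cm11A := condMean_mul YA ZA ZB true true (gfun s x) h11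
  have cm10A := condMean_mul YA ZA ZB true false (gfun s x) h10
  have cm11B := condMean_mul YB ZA ZB true true (gfun s x) h11
  have dA := domFn_eq YA s x
  have dB := domFn_eq YB s x
  rw [hsplit] at dA dB
  rw [← hT11] at cm11A cm11B
  rw [← hT10] at cm10A
  have hNne : (N : ℝ) ≠ 0 := ne_of_gt hNpos
  refine ⟨⟨?_, ?_⟩, ?_, ?_⟩
  · rw [cm11A, cm10A, dA, ← add_div]
    gcongr ?_ / _
    linarith [hAnn T00]
  · rw [cm11A, cm10A, dA, hdff]
    have hrw : (∑ i ∈ T11, gfun s x (YA i)) / N + (∑ i ∈ T10, gfun s x (YA i)) / N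
        + (x - YlA) ^ (s - 1) / ((s - 1).factorial : ℝ) * ((T00.card : ℝ) / N)
        = ((∑ i ∈ T11, gfun s x (YA i)) + (∑ i ∈ T10, gfun s x (YA i))
            + (T00.card : ℝ) * ((x - YlA) ^ (s - 1) / ((s - 1).factorial : ℝ))) / N := by
      field_simp
    rw [hrw]
    gcongr ?_ / _
    linarith [hAub T00]
  · rw [cm11B, dB]
    gcongr ?_ / _
    linarith [hBnn T00, hBnn T10]
  · rw [cm11B, dB, hdff, hdtf]
    have hrw : (∑ i ∈ T11, gfun s x (YB i)) / N
        + (x - YlB) ^ (s - 1) / ((s - 1).factorial : ℝ)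
            * ((T00.card : ℝ) / N + (T10.card : ℝ) / N)
        = ((∑ i ∈ T11, gfun s x (YB i))
            + (T00.card : ℝ) * ((x - YlB) ^ (s - 1) / ((s - 1).factorial : ℝ))
            + (T10.card : ℝ) * ((x - YlB) ^ (s - 1) / ((s - 1).factorial : ℝ))) / N := by
      field_simp
      ring
    rw [hrw]
    gcongr ?_ / _
    linarith [hBub T00, hBub T10]
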